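/- arXiv:1309.6895 — 5 statements merged into one kernel-verified Lean document; each statement's English description precedes it below -/
import Mathlib

section
/- For x ≠ μ fixed, if a sequence of positive definite matrices Σ_m with bounded eigenvalue ratio λ_max(Σ_m)/λ_min(Σ_m) ≤ γ satisfies λ_min(Σ_m) ↘ 0, then the product φ(μ; μ, Σ_m) · φ(x; μ, Σ_m) → 0. -/
open Real Matrix Filter Topology MeasureTheory

/-- smallest eigenvalue (infimum of the spectrum) of a real matrix -/
noncomputable def lamMin {p : ℕ} (A : Matrix (Fin p) (Fin p) ℝ) : ℝ := sInf (spectrum ℝ A)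

/-- largest eigenvalue (supremum of the spectrum) of a real matrix -/
noncomputable def lamMax {p : ℕ} (A : Matrix (Fin p) (Fin p) ℝ) : ℝ := sSup (spectrum ℝ A)

/-- The `p`-dimensional Gaussian density with mean `μ` and covariance matrix `S`. -/
noncomputable def gauss {p : ℕ} (x μ : Fin p → ℝ) (S : Matrix (Fin p) (Fin p) ℝ) : ℝ :=
  (2 * π) ^ (-(p : ℝ) / 2) * S.det ^ (-(1 : ℝ) / 2) *
    Real.exp (-((x - μ) ⬝ᵥ (S⁻¹ *ᵥ (x - μ))) / 2)

variable {p : ℕ}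

lemma lamMin_le' {A : Matrix (Fin p) (Fin p) ℝ} (hA : A.IsHermitian) (i : Fin p) :
    sInf (spectrum ℝ A) ≤ hA.eigenvalues i := by
  rw [hA.spectrum_real_eq_range_eigenvalues]
  exact csInf_le (Set.finite_range _).bddBelow ⟨i, rfl⟩

lemma le_lamMax' {A : Matrix (Fin p) (Fin p) ℝ} (hA : A.IsHermitian) (i : Fin p) :
    hA.eigenvalues i ≤ sSup (spectrum ℝ A) := by
  rw [hA.spectrum_real_eq_range_eigenvalues]
  exact le_csSup (Set.finite_range _).bddAbove ⟨i, rfl⟩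

lemma lamMin_pos' (hp : 0 < p) {A : Matrix (Fin p) (Fin p) ℝ} (hA : A.PosDef) :
    0 < sInf (spectrum ℝ A) := by
  have hne : (Set.range hA.1.eigenvalues).Nonempty := ⟨_, ⟨⟨0, hp⟩, rfl⟩⟩
  rw [hA.1.spectrum_real_eq_range_eigenvalues]
  have hmem := hne.csInf_mem (Set.finite_range hA.1.eigenvalues)
  obtain ⟨i, hi⟩ := hmem
  rw [← hi]
  exact hA.eigenvalues_pos i

lemma inv_spectral {A : Matrix (Fin p) (Fin p) ℝ} (hA : A.PosDef) :
    A⁻¹ = (Matrix.IsHermitian.eigenvectorUnitary hA.1 : Matrix (Fin p) (Fin p) ℝ) *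
      diagonal (fun i => (hA.1.eigenvalues i)⁻¹) *
      star (Matrix.IsHermitian.eigenvectorUnitary hA.1 : Matrix (Fin p) (Fin p) ℝ) := by
  set U := (Matrix.IsHermitian.eigenvectorUnitary hA.1 : Matrix (Fin p) (Fin p) ℝ)
  have hU1 : U * star U = 1 := (Matrix.mem_unitaryGroup_iff).mp (Matrix.IsHermitian.eigenvectorUnitary hA.1).2
  have hU2 : star U * U = 1 := (Matrix.mem_unitaryGroup_iff').mp (Matrix.IsHermitian.eigenvectorUnitary hA.1).2
  have hspec : A = U * diagonal hA.1.eigenvalues * star U := by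
    have := hA.1.spectral_theorem
    simpa [RCLike.ofReal_real_eq_id] using this
  apply Matrix.inv_eq_right_inv
  have : diagonal hA.1.eigenvalues * diagonal (fun i => (hA.1.eigenvalues i)⁻¹) = 1 := by
    have h4 : (fun i => hA.1.eigenvalues i * (hA.1.eigenvalues i)⁻¹) = fun _ => (1:ℝ) :=
      funext fun i => mul_inv_cancel₀ (hA.eigenvalues_pos i).ne'
    rw [diagonal_mul_diagonal, h4, diagonal_one]
  calc A * (U * diagonal (fun i => (hA.1.eigenvalues i)⁻¹) * star U)
      = U * diagonal hA.1.eigenvalues * star U * (U * diagonal (fun i => (hA.1.eigenvalues i)⁻¹) * star U) := by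
        rw [← hspec]
    _ = U * diagonal hA.1.eigenvalues * (star U * U) * diagonal (fun i => (hA.1.eigenvalues i)⁻¹) * star U := by
        simp only [Matrix.mul_assoc]
    _ = U * (diagonal hA.1.eigenvalues * diagonal (fun i => (hA.1.eigenvalues i)⁻¹)) * star U := by
        rw [hU2]; simp only [Matrix.mul_assoc, Matrix.mul_one, Matrix.one_mul]
    _ = 1 := by rw [this, mul_one, hU1]

lemma quad_bound (hp : 0 < p) {A : Matrix (Fin p) (Fin p) ℝ} (hA : A.PosDef) (v : Fin p → ℝ) :
    (v ⬝ᵥ v) / sSup (spectrum ℝ A) ≤ v ⬝ᵥ (A⁻¹ *ᵥ v) := by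
  set c : ℝ := (sSup (spectrum ℝ A))⁻¹ with hc
  have hmaxpos : 0 < sSup (spectrum ℝ A) :=
    lt_of_lt_of_le (lamMin_pos' hp hA) ((lamMin_le' hA.1 ⟨0, hp⟩).trans (le_lamMax' hA.1 ⟨0, hp⟩))
  set U := (Matrix.IsHermitian.eigenvectorUnitary hA.1 : Matrix (Fin p) (Fin p) ℝ)
  have hU1 : U * star U = 1 := (Matrix.mem_unitaryGroup_iff).mp (Matrix.IsHermitian.eigenvectorUnitary hA.1).2
  have hpsd : (A⁻¹ - c • 1).PosSemidef := by
    have h1 : A⁻¹ - c • 1 = U * diagonal (fun i => (hA.1.eigenvalues i)⁻¹ - c) * Uᴴ := by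
      rw [inv_spectral hA, ← Matrix.star_eq_conjTranspose]
      have : (c • 1 : Matrix (Fin p) (Fin p) ℝ) = U * (diagonal fun _ => c) * star U := by
        rw [← Matrix.smul_one_eq_diagonal]
        rw [mul_smul_comm, smul_mul_assoc, mul_one, hU1]
      rw [this, ← sub_mul, ← mul_sub, diagonal_sub]
    rw [h1]
    refine Matrix.PosSemidef.mul_mul_conjTranspose_same ?_ U
    rw [posSemidef_diagonal_iff]
    intro i
    have h2 : hA.1.eigenvalues i ≤ sSup (spectrum ℝ A) := le_lamMax' hA.1 i
    have h3 : c ≤ (hA.1.eigenvalues i)⁻¹ := inv_anti₀ (hA.eigenvalues_pos i) h2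
    linarith
  have := hpsd.dotProduct_mulVec_nonneg v
  have hexp : (star v) ⬝ᵥ ((A⁻¹ - c • 1) *ᵥ v) = v ⬝ᵥ (A⁻¹ *ᵥ v) - c * (v ⬝ᵥ v) := by
    rw [Matrix.sub_mulVec, dotProduct_sub, Matrix.smul_mulVec, Matrix.one_mulVec,
      dotProduct_smul, star_trivial, smul_eq_mul]
  rw [hexp] at this
  rw [div_eq_inv_mul, ← hc]
  linarith


/-- for fixed x ≠ μ, if λ_min(Σ_m) ↘ 0 under the eigenratio constraint, then
the product φ(μ; μ, Σ_m) · φ(x; μ, Σ_m) → 0. -/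
theorem stmt3 {p : ℕ} (hp : 0 < p) (γ : ℝ) (hγ : 1 ≤ γ)
    (μ x : Fin p → ℝ) (hxμ : x ≠ μ) (S : ℕ → Matrix (Fin p) (Fin p) ℝ)
    (hPD : ∀ m, (S m).PosDef)
    (hratio : ∀ m, lamMax (S m) ≤ γ * lamMin (S m))
    (hto : Tendsto (fun m => lamMin (S m)) atTop (nhds 0)) :
    Tendsto (fun m => gauss μ μ (S m) * gauss x μ (S m)) atTop (nhds 0) := by
  have hγ0 : 0 < γ := lt_of_lt_of_le one_pos hγ
  set v : Fin p → ℝ := x - μ with hv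
  have hvne : v ≠ 0 := sub_ne_zero.mpr hxμ
  have hcpos : 0 < v ⬝ᵥ v := by
    have hnn : 0 ≤ v ⬝ᵥ v := Finset.sum_nonneg fun i _ => mul_self_nonneg (v i)
    rcases lt_or_eq_of_le hnn with h | h
    · exact h
    · exact absurd (dotProduct_self_eq_zero.mp h.symm) hvne
  set a : ℝ := (v ⬝ᵥ v) / (2 * γ) with ha
  have hapos : 0 < a := div_pos hcpos (by linarith)
  set g : ℝ → ℝ := fun t => (t ^ p)⁻¹ * Real.exp (-(a / t)) with hg
  -- the dominating sequence tends to 0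
  have hgto : Tendsto (fun m => g (lamMin (S m))) atTop (nhds 0) := by
    have h1 : Tendsto (fun m => lamMin (S m)) atTop (nhdsWithin 0 (Set.Ioi 0)) := by
      apply tendsto_nhdsWithin_of_tendsto_nhds_of_eventually_within _ hto
      exact Eventually.of_forall fun m => lamMin_pos' hp (hPD m)
    have h2 : Tendsto g (nhdsWithin (0:ℝ) (Set.Ioi 0)) (nhds 0) := by
      have h3 : Tendsto (fun s : ℝ => (s ^ p) * Real.exp (-(a * s))) atTop (nhds 0) := by
        have h4 : Tendsto (fun s : ℝ => a * s) atTop atTop :=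
          Tendsto.const_mul_atTop hapos tendsto_id
        have h5 := (tendsto_pow_mul_exp_neg_atTop_nhds_zero p).comp h4
        have h6 : Tendsto (fun s : ℝ => (a ^ p)⁻¹ * ((a * s) ^ p * Real.exp (-(a * s))))
            atTop (nhds ((a ^ p)⁻¹ * 0)) := h5.const_mul _
        rw [mul_zero] at h6
        refine h6.congr fun s => ?_
        rw [mul_pow]
        field_simp
      have h7 := h3.comp tendsto_inv_nhdsGT_zero
      refine h7.congr fun t => ?_
      simp only [Function.comp_apply, hg, inv_pow, div_eq_mul_inv, mul_comm a t⁻¹]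
    exact h2.comp h1
  -- squeeze
  apply squeeze_zero (g := fun m => g (lamMin (S m))) ?_ ?_ hgto
  · intro m
    have hdet : 0 < (S m).det := (hPD m).det_pos
    have e1 : 0 < (2 * π) ^ (-(p : ℝ) / 2) := Real.rpow_pos_of_pos (by positivity) _
    have e2 : 0 < (S m).det ^ (-(1:ℝ) / 2) := Real.rpow_pos_of_pos hdet _
    unfold gauss
    positivity
  · intro m
    set t : ℝ := lamMin (S m) with ht
    have htpos : 0 < t := lamMin_pos' hp (hPD m)
    have hdet : 0 < (S m).det := (hPD m).det_pos
    have hmaxpos : 0 < lamMax (S m) :=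
      lt_of_lt_of_le htpos ((lamMin_le' (hPD m).1 ⟨0, hp⟩).trans (le_lamMax' (hPD m).1 ⟨0, hp⟩))
    -- determinant lower bound
    have hdetge : t ^ p ≤ (S m).det := by
      have := (hPD m).1.det_eq_prod_eigenvalues
      rw [show ((S m).det : ℝ) = ∏ i, (hPD m).1.eigenvalues i by exact_mod_cast this]
      calc t ^ p = ∏ _i : Fin p, t := by rw [Finset.prod_const, Finset.card_univ, Fintype.card_fin]
        _ ≤ ∏ i, (hPD m).1.eigenvalues i :=
          Finset.prod_le_prod (fun i _ => htpos.le) (fun i _ => lamMin_le' (hPD m).1 i)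
    -- quadratic form lower bound
    have hq : a / t ≤ (v ⬝ᵥ ((S m)⁻¹ *ᵥ v)) / 2 := by
      have hq1 : (v ⬝ᵥ v) / lamMax (S m) ≤ v ⬝ᵥ ((S m)⁻¹ *ᵥ v) := quad_bound hp (hPD m) v
      have hq2 : (v ⬝ᵥ v) / (γ * t) ≤ (v ⬝ᵥ v) / lamMax (S m) :=
        div_le_div_of_nonneg_left hcpos.le hmaxpos (hratio m)
      have : a / t = ((v ⬝ᵥ v) / (γ * t)) / 2 := by
        rw [ha, div_div, div_div]; congr 1; ring
      rw [this]
      linarith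
    -- main bound
    have key : gauss μ μ (S m) * gauss x μ (S m)
        ≤ ((S m).det)⁻¹ * Real.exp (-((v ⬝ᵥ ((S m)⁻¹ *ᵥ v)) / 2)) := by
      have hCle : (2 * π) ^ (-(p:ℝ) / 2) ≤ 1 :=
        Real.rpow_le_one_of_one_le_of_nonpos (by nlinarith [Real.pi_gt_three])
          (by have : (0:ℝ) ≤ (p:ℝ)/2 := by positivity
              linarith)
      have hC : 0 < (2 * π) ^ (-(p:ℝ) / 2) := Real.rpow_pos_of_pos (by positivity) _
      have hD : 0 < (S m).det ^ (-(1:ℝ) / 2) := Real.rpow_pos_of_pos hdet _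
      have hDD : (S m).det ^ (-(1:ℝ) / 2) * (S m).det ^ (-(1:ℝ) / 2) = ((S m).det)⁻¹ := by
        rw [← Real.rpow_add hdet]
        norm_num [Real.rpow_neg_one]
      have hE : 0 < Real.exp (-(v ⬝ᵥ ((S m)⁻¹ *ᵥ v)) / 2) := Real.exp_pos _
      have hexp0 : gauss μ μ (S m) = (2 * π) ^ (-(p:ℝ) / 2) * (S m).det ^ (-(1:ℝ) / 2) := by
        unfold gauss
        simp
      rw [hexp0]
      unfold gauss
      rw [← hv]
      have expand : (2 * π) ^ (-(p:ℝ) / 2) * (S m).det ^ (-(1:ℝ) / 2) *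
          ((2 * π) ^ (-(p:ℝ) / 2) * (S m).det ^ (-(1:ℝ) / 2) * Real.exp (-(v ⬝ᵥ ((S m)⁻¹ *ᵥ v)) / 2))
          = ((2 * π) ^ (-(p:ℝ) / 2) * (2 * π) ^ (-(p:ℝ) / 2)) *
            (((S m).det ^ (-(1:ℝ) / 2) * (S m).det ^ (-(1:ℝ) / 2)) * Real.exp (-(v ⬝ᵥ ((S m)⁻¹ *ᵥ v)) / 2)) := by
        ring
      rw [expand, hDD]
      have h8 : (2:ℝ) * π ≥ 0 := by positivity
      calc ((2 * π) ^ (-(p:ℝ) / 2) * (2 * π) ^ (-(p:ℝ) / 2)) *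
            (((S m).det)⁻¹ * Real.exp (-(v ⬝ᵥ ((S m)⁻¹ *ᵥ v)) / 2))
          ≤ 1 * (((S m).det)⁻¹ * Real.exp (-(v ⬝ᵥ ((S m)⁻¹ *ᵥ v)) / 2)) := by
            apply mul_le_mul_of_nonneg_right _ (by positivity)
            nlinarith
        _ = ((S m).det)⁻¹ * Real.exp (-((v ⬝ᵥ ((S m)⁻¹ *ᵥ v)) / 2)) := by rw [one_mul, neg_div]
    refine key.trans ?_
    rw [hg]
    apply mul_le_mul
    · exact inv_anti₀ (pow_pos htpos p) hdetge
    · rw [Real.exp_le_exp]; linarith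
    · positivity
    · exact inv_nonneg.mpr (pow_pos htpos p).le
end

section
/- Let S be a symmetric positive semidefinite p×p matrix with spectral decomposition S = G L G' where L = diag(l_1,...,l_p). Among all positive definite Σ with spectral decomposition Σ = Γ Λ Γ', the function Σ ↦ tr(Σ^{-1} S) - log det(Σ^{-1}) satisfies tr(Λ^{-1} L) - log det(Λ^{-1}) ≤ tr(Σ^{-1} S) - log det(Σ^{-1}) whenever Γ's columns are the eigenvectors of S matched to the eigenvalue ordering, with equality iff Γ = G (up to eigenvector sign/ordering ambiguity). -/
open Real Matrix Finset

private lemma key_ds {p : ℕ} (a L : Fin p → ℝ) (ha : Antivary a L)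
    (D : Matrix (Fin p) (Fin p) ℝ) (hD : D ∈ doublyStochastic ℝ (Fin p)) :
    ∑ i, a i * L i ≤ ∑ i, ∑ j, a i * D i j * L j := by
  obtain ⟨w, hw0, hw1, hwD⟩ := exists_eq_sum_perm_of_mem_doublyStochastic hD
  have hentry : ∀ i j, D i j = ∑ σ : Equiv.Perm (Fin p), w σ * (σ.permMatrix ℝ) i j := by
    intro i j; rw [← hwD]
    simp only [Matrix.sum_apply, Matrix.smul_apply, smul_eq_mul]
  have hinner : ∀ i, ∑ j, a i * D i j * L j
      = ∑ σ : Equiv.Perm (Fin p), w σ * (a i * L (σ i)) := by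
    intro i
    have h1 : ∀ j, a i * D i j * L j
        = ∑ σ : Equiv.Perm (Fin p), w σ * (if σ i = j then a i * L j else 0) := by
      intro j
      rw [hentry, Finset.mul_sum, Finset.sum_mul]
      refine Finset.sum_congr rfl fun σ _ => ?_
      simp only [Equiv.Perm.permMatrix, PEquiv.toMatrix_apply, Equiv.toPEquiv_apply,
        Option.mem_some_iff]
      by_cases h : j = σ i <;> simp [h] <;> ring
    simp only [h1]
    rw [Finset.sum_comm]
    refine Finset.sum_congr rfl fun σ _ => ?_
    rw [← Finset.mul_sum, Finset.sum_ite_eq]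
    simp
  have hrw : ∑ i, ∑ j, a i * D i j * L j
      = ∑ σ : Equiv.Perm (Fin p), w σ * ∑ i, a i * L (σ i) := by
    simp only [hinner]
    rw [Finset.sum_comm]
    exact Finset.sum_congr rfl fun σ _ => (Finset.mul_sum _ _ _).symm
  rw [hrw]
  calc ∑ i, a i * L i = ∑ σ : Equiv.Perm (Fin p), w σ * ∑ i, a i * L i := by
        rw [← Finset.sum_mul, hw1, one_mul]
    _ ≤ ∑ σ : Equiv.Perm (Fin p), w σ * ∑ i, a i * L (σ i) := by
        refine Finset.sum_le_sum fun σ _ => mul_le_mul_of_nonneg_left ?_ (hw0 σ)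
        exact ha.sum_mul_le_sum_mul_comp_perm

/-- Theobald-type trace inequality. If S = G L G' (L = diag of eigenvalues,
G orthogonal) is positive semidefinite and Σ = Γ Λ Γ' is positive definite, with the
eigenvalues in matching (monotone) order, then
tr(Λ⁻¹ L) - log det(Λ⁻¹) ≤ tr(Σ⁻¹ S) - log det(Σ⁻¹), with equality when Γ = G. -/
theorem stmt7 {p : ℕ} (hp : 0 < p)
    (S Sig Gm Γ : Matrix (Fin p) (Fin p) ℝ) (L Λ : Fin p → ℝ)
    (hGm : Gm * Gmᵀ = 1) (hGm' : Gmᵀ * Gm = 1)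
    (hΓ : Γ * Γᵀ = 1) (hΓ' : Γᵀ * Γ = 1)
    (hSdec : S = Gm * Matrix.diagonal L * Gmᵀ)
    (hSigdec : Sig = Γ * Matrix.diagonal Λ * Γᵀ)
    (hL : ∀ i, 0 ≤ L i) (hΛ : ∀ i, 0 < Λ i)
    (hLmono : Monotone L) (hΛmono : Monotone Λ) :
    Matrix.trace ((Matrix.diagonal Λ)⁻¹ * Matrix.diagonal L) -
        Real.log ((Matrix.diagonal Λ)⁻¹).det ≤
      Matrix.trace (Sig⁻¹ * S) - Real.log (Sig⁻¹).det ∧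
    (Γ = Gm →
      Matrix.trace ((Matrix.diagonal Λ)⁻¹ * Matrix.diagonal L) -
          Real.log ((Matrix.diagonal Λ)⁻¹).det =
        Matrix.trace (Sig⁻¹ * S) - Real.log (Sig⁻¹).det) := by
  classical
  set a : Fin p → ℝ := fun i => (Λ i)⁻¹ with ha_def
  have hΛne : ∀ i, Λ i ≠ 0 := fun i => (hΛ i).ne'
  have hDaΛ : Matrix.diagonal Λ * Matrix.diagonal a = 1 := by
    rw [Matrix.diagonal_mul_diagonal]
    ext i j
    by_cases h : i = j <;>
      simp [Matrix.diagonal_apply, Matrix.one_apply, h, ha_def, mul_inv_cancel₀ (hΛne j)]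
  have hinvΛ : (Matrix.diagonal Λ)⁻¹ = Matrix.diagonal a :=
    Matrix.inv_eq_right_inv hDaΛ
  have hSiginv : Sig⁻¹ = Γ * Matrix.diagonal a * Γᵀ := by
    apply Matrix.inv_eq_right_inv
    rw [hSigdec]
    calc Γ * Matrix.diagonal Λ * Γᵀ * (Γ * Matrix.diagonal a * Γᵀ)
        = Γ * Matrix.diagonal Λ * (Γᵀ * Γ) * Matrix.diagonal a * Γᵀ := by
          simp only [Matrix.mul_assoc]
      _ = Γ * (Matrix.diagonal Λ * Matrix.diagonal a) * Γᵀ := by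
          rw [hΓ']; simp only [Matrix.mul_one, Matrix.mul_assoc]
      _ = 1 := by rw [hDaΛ, Matrix.mul_one, hΓ]
  -- determinants
  have hdetΓ : Γ.det * Γ.det = 1 := by
    have := congrArg Matrix.det hΓ
    rwa [Matrix.det_mul, Matrix.det_transpose, Matrix.det_one] at this
  have hdetSiginv : (Sig⁻¹).det = (Matrix.diagonal a).det := by
    rw [hSiginv, Matrix.det_mul, Matrix.det_mul, Matrix.det_transpose]
    calc Γ.det * (Matrix.diagonal a).det * Γ.det
        = Γ.det * Γ.det * (Matrix.diagonal a).det := by ring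
      _ = (Matrix.diagonal a).det := by rw [hdetΓ, one_mul]
  -- trace lhs
  have htrL : Matrix.trace ((Matrix.diagonal Λ)⁻¹ * Matrix.diagonal L)
      = ∑ i, a i * L i := by
    rw [hinvΛ, Matrix.diagonal_mul_diagonal, Matrix.trace_diagonal]
  -- U and D
  set U : Matrix (Fin p) (Fin p) ℝ := Γᵀ * Gm with hU_def
  have hUUt : U * Uᵀ = 1 := by
    rw [hU_def, Matrix.transpose_mul, Matrix.transpose_transpose]
    calc Γᵀ * Gm * (Gmᵀ * Γ) = Γᵀ * (Gm * Gmᵀ) * Γ := by simp only [Matrix.mul_assoc]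
      _ = 1 := by rw [hGm, Matrix.mul_one, hΓ']
  have hUtU : Uᵀ * U = 1 := by
    rw [hU_def, Matrix.transpose_mul, Matrix.transpose_transpose]
    calc Gmᵀ * Γ * (Γᵀ * Gm) = Gmᵀ * (Γ * Γᵀ) * Gm := by simp only [Matrix.mul_assoc]
      _ = 1 := by rw [hΓ, Matrix.mul_one, hGm']
  set D : Matrix (Fin p) (Fin p) ℝ := fun i j => (U i j) ^ 2 with hD_def
  have hDrow : ∀ i, ∑ j, D i j = 1 := by
    intro i
    have := congrFun (congrFun hUUt i) i
    simp only [Matrix.mul_apply, Matrix.transpose_apply, Matrix.one_apply_eq] at this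
    rw [← this]
    exact Finset.sum_congr rfl fun j _ => (sq (U i j)).symm ▸ by ring
  have hDcol : ∀ j, ∑ i, D i j = 1 := by
    intro j
    have := congrFun (congrFun hUtU j) j
    simp only [Matrix.mul_apply, Matrix.transpose_apply, Matrix.one_apply_eq] at this
    rw [← this]
    exact Finset.sum_congr rfl fun i _ => by ring
  have hDmem : D ∈ doublyStochastic ℝ (Fin p) := by
    rw [mem_doublyStochastic_iff_sum]
    exact ⟨fun i j => sq_nonneg _, hDrow, hDcol⟩
  -- trace rhs
  have htrR : Matrix.trace (Sig⁻¹ * S) = ∑ i, ∑ j, a i * D i j * L j := by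
    have hprod : Sig⁻¹ * S = Γ * (Matrix.diagonal a * (U * (Matrix.diagonal L * Uᵀ))) * Γᵀ := by
      rw [hSiginv, hSdec, hU_def]
      simp only [Matrix.transpose_mul, Matrix.transpose_transpose, Matrix.mul_assoc]
      rw [hΓ, Matrix.mul_one]
    rw [hprod, Matrix.trace_mul_cycle, ← Matrix.mul_assoc, hΓ', Matrix.one_mul]
    rw [Matrix.trace]
    refine Finset.sum_congr rfl fun i _ => ?_
    rw [Matrix.diag_apply, Matrix.diagonal_mul, Matrix.mul_apply, Finset.mul_sum]
    refine Finset.sum_congr rfl fun j _ => ?_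
    rw [Matrix.diagonal_mul, Matrix.transpose_apply]
    simp only [hD_def]
    ring
  -- antivary
  have hanti : Antivary a L := by
    intro i j hij
    have hij' : i ≤ j := by
      by_contra h
      exact absurd (hLmono (le_of_not_ge h)) (not_le.mpr hij)
    have : Λ i ≤ Λ j := hΛmono hij'
    exact inv_anti₀ (hΛ i) this
  constructor
  · have := key_ds a L hanti D hDmem
    rw [htrL, htrR, hdetSiginv, hinvΛ]
    linarith
  · intro hΓGm
    subst hΓGm
    have hUeq : U = 1 := by rw [hU_def]; exact hGm'
    rw [htrL, htrR, hdetSiginv, hinvΛ]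
    have : ∀ i, ∑ j, a i * D i j * L j = a i * L i := by
      intro i
      have : ∀ j, a i * D i j * L j = if i = j then a i * L j else 0 := by
        intro j
        simp only [hD_def, hUeq]
        by_cases h : i = j <;> simp [Matrix.one_apply, h]
      simp only [this, Finset.sum_ite_eq, Finset.mem_univ, if_true]
    rw [Finset.sum_congr rfl fun i _ => this i]
end

section
/- Let x_1,...,x_n ∈ ℝ^p with more than G distinct points (#{x_1,...,x_n} > G). Let (θ_m) be a sequence of Gaussian mixture parameters with G components satisfying the eigenratio constraint λ_max(θ_m)/λ_min(θ_m) ≤ γ, and suppose some covariance eigenvalue λ_{k,j,m} ↘ 0 as m → ∞. Then the Gaussian-mixture log-likelihood l_n(θ_m) = (1/n) Σ_i log(Σ_{j=1}^G π_j φ(x_i; μ_{j,m}, Σ_{j,m})) tends to -∞. -/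
open Real Matrix Filter Topology MeasureTheory

lemma stmt8_spectrum_eq {q : ℕ} {A : Matrix (Fin q) (Fin q) ℝ}
    (hA : A.IsHermitian) : spectrum ℝ A = Set.range hA.eigenvalues := by
  conv_lhs => rw [hA.spectral_theorem]
  rw [Unitary.conjStarAlgAut_apply, Unitary.spectrum_star_right_conjugate, spectrum_diagonal]
  simp [Function.comp]

lemma stmt8_inv_eq {q : ℕ} {A : Matrix (Fin q) (Fin q) ℝ} (hA : A.PosDef) :
    A⁻¹ = (hA.1.eigenvectorUnitary : Matrix (Fin q) (Fin q) ℝ) *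
      Matrix.diagonal (fun k => (hA.1.eigenvalues k)⁻¹) *
      star (hA.1.eigenvectorUnitary : Matrix (Fin q) (Fin q) ℝ) := by
  set U := (hA.1.eigenvectorUnitary : Matrix (Fin q) (Fin q) ℝ) with hUdef
  set D := (Matrix.diagonal (RCLike.ofReal ∘ hA.1.eigenvalues) : Matrix (Fin q) (Fin q) ℝ)
    with hDdef
  set D' := (Matrix.diagonal (fun k => (hA.1.eigenvalues k)⁻¹) : Matrix (Fin q) (Fin q) ℝ)
    with hD'def
  have hUU : star U * U = 1 := by rw [hUdef]; exact Unitary.coe_star_mul_self _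
  have hUU' : U * star U = 1 := by rw [hUdef]; exact Unitary.coe_mul_star_self _
  have hDD : D * D' = 1 := by
    rw [hDdef, hD'def, Matrix.diagonal_mul_diagonal]
    ext i k
    by_cases h : i = k <;>
      simp [Matrix.diagonal_apply, Matrix.one_apply, h,
        mul_inv_cancel₀ (hA.eigenvalues_pos k).ne']
  apply Matrix.inv_eq_right_inv
  calc A * (U * D' * star U) = U * D * star U * (U * D' * star U) := by
        have h := hA.1.spectral_theorem
        rw [Unitary.conjStarAlgAut_apply] at h
        rw [h]
    _ = U * (D * ((star U * U) * D')) * star U := by noncomm_ring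
    _ = 1 := by rw [hUU, one_mul, hDD, mul_one, hUU']

lemma stmt8_quad_ge {q : ℕ} {A : Matrix (Fin q) (Fin q) ℝ} (hA : A.PosDef) {c : ℝ}
    (hc : 0 < c) (hle : ∀ k, hA.1.eigenvalues k ≤ c) (v : Fin q → ℝ) :
    (v ⬝ᵥ v) / c ≤ v ⬝ᵥ (A⁻¹ *ᵥ v) := by
  set U := (hA.1.eigenvectorUnitary : Matrix (Fin q) (Fin q) ℝ) with hUdef
  have hUU' : U * star U = 1 := by rw [hUdef]; exact Unitary.coe_mul_star_self _
  have hstar : star U = Uᵀ := by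
    ext i k
    simp [Matrix.star_apply, Matrix.transpose_apply]
  set u := star U *ᵥ v with hu
  have hdot : ∀ (y : Fin q → ℝ), v ⬝ᵥ (U *ᵥ y) = u ⬝ᵥ y := by
    intro y
    rw [Matrix.dotProduct_mulVec, hu, hstar, ← Matrix.mulVec_transpose]
  have hUv : U *ᵥ u = v := by
    rw [hu, Matrix.mulVec_mulVec, hUU', Matrix.one_mulVec]
  have h2 : v ⬝ᵥ v = u ⬝ᵥ u := by rw [← hdot u, hUv]
  have h1 : v ⬝ᵥ (A⁻¹ *ᵥ v) = ∑ k, (u k)^2 * (hA.1.eigenvalues k)⁻¹ := by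
    rw [stmt8_inv_eq hA, ← hUdef, ← Matrix.mulVec_mulVec, ← Matrix.mulVec_mulVec, hdot, ← hu]
    have hdm : (Matrix.diagonal (fun k => (hA.1.eigenvalues k)⁻¹)) *ᵥ u
        = fun k => (hA.1.eigenvalues k)⁻¹ * u k := by
      ext k
      simp [Matrix.mulVec_diagonal]
    rw [hdm, dotProduct]
    exact Finset.sum_congr rfl fun k _ => by ring
  rw [h1, h2, dotProduct, Finset.sum_div]
  apply Finset.sum_le_sum
  intro k _
  have hk := hA.eigenvalues_pos k
  calc u k * u k / c = (u k)^2 * (1/c) := by ring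
    _ ≤ (u k)^2 * (1/(hA.1.eigenvalues k)) :=
        mul_le_mul_of_nonneg_left (one_div_le_one_div_of_le hk (hle k)) (sq_nonneg _)
    _ = (u k)^2 * (hA.1.eigenvalues k)⁻¹ := by rw [one_div]

/-- Lemma 1 of the paper: with more than G distinct data points, if along a
sequence of G-component Gaussian mixture parameters satisfying the eigenratio constraint
some covariance eigenvalue tends to 0, the mixture log-likelihood tends to -∞. -/
theorem stmt8 {p G n : ℕ} (hp : 0 < p) (hG : 0 < G) (hn : 0 < n)
    (γ : ℝ) (hγ : 1 ≤ γ) (x : Fin n → Fin p → ℝ)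
    (hcard : G < (Set.range x).ncard)
    (w : ℕ → Fin G → ℝ) (μ : ℕ → Fin G → Fin p → ℝ)
    (S : ℕ → Fin G → Matrix (Fin p) (Fin p) ℝ)
    (hw : ∀ m j, 0 ≤ w m j) (hsum : ∀ m, ∑ j, w m j = 1)
    (hPD : ∀ m j, (S m j).PosDef)
    (hratio : ∀ m, (⨆ j, lamMax (S m j)) ≤ γ * ⨅ j, lamMin (S m j))
    (j : Fin G) (lam : ℕ → ℝ)
    (hmem : ∀ m, lam m ∈ spectrum ℝ (S m j))
    (hto : Tendsto lam atTop (nhds 0)) :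
    Tendsto
      (fun m => (1 / n : ℝ) * ∑ i, Real.log (∑ j', w m j' * gauss (x i) (μ m j') (S m j')))
      atTop atBot := by
  classical
  have hπ : (0:ℝ) < 2 * π := by positivity
  have hn0 : (0:ℝ) < (n:ℝ) := by exact_mod_cast hn
  have hγ0 : (0:ℝ) < γ := lt_of_lt_of_le zero_lt_one hγ
  have hFp : Nonempty (Fin p) := ⟨⟨0, hp⟩⟩
  have hFG : Nonempty (Fin G) := ⟨⟨0, hG⟩⟩
  -- eigenvalue infrastructure
  set lmin : ℕ → ℝ := fun m => ⨅ j', lamMin (S m j') with hlmindef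
  have hspec : ∀ m j', spectrum ℝ (S m j') = Set.range (hPD m j').1.eigenvalues :=
    fun m j' => stmt8_spectrum_eq (hPD m j').1
  have hbddB : ∀ m j', BddBelow (spectrum ℝ (S m j')) := fun m j' => by
    rw [hspec]; exact (Set.finite_range _).bddBelow
  have hbddA : ∀ m j', BddAbove (spectrum ℝ (S m j')) := fun m j' => by
    rw [hspec]; exact (Set.finite_range _).bddAbove
  have hlamMin_le : ∀ m j' k, lamMin (S m j') ≤ (hPD m j').1.eigenvalues k := fun m j' k =>
    csInf_le (hbddB m j') (by rw [hspec]; exact Set.mem_range_self k)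
  have hlamMin_eq : ∀ m j', lamMin (S m j') = sInf (Set.range (hPD m j').1.eigenvalues) :=
    fun m j' => by rw [lamMin, hspec]
  have hlamMin_pos : ∀ m j', 0 < lamMin (S m j') := by
    intro m j'
    obtain ⟨k, hk⟩ := Set.Nonempty.csInf_mem
      (Set.range_nonempty (hPD m j').1.eigenvalues) (Set.finite_range _)
    rw [hlamMin_eq, ← hk]
    exact (hPD m j').eigenvalues_pos k
  have hlmin_le : ∀ m j', lmin m ≤ lamMin (S m j') := fun m j' =>
    ciInf_le (Set.Finite.bddBelow (Set.finite_range _)) j'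
  have hlmin_pos : ∀ m, 0 < lmin m := by
    intro m
    obtain ⟨j', hj'⟩ := exists_eq_ciInf_of_finite (f := fun j' => lamMin (S m j'))
    rw [show lmin m = ⨅ j', lamMin (S m j') from rfl, ← hj']
    exact hlamMin_pos m j'
  have hlam_lb : ∀ m, lmin m ≤ lam m :=
    fun m => le_trans (hlmin_le m j) (csInf_le (hbddB m j) (hmem m))
  have hlmin_to : Tendsto lmin atTop (𝓝 0) :=
    tendsto_of_tendsto_of_tendsto_of_le_of_le tendsto_const_nhds hto
      (fun m => (hlmin_pos m).le) hlam_lb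
  have hub : ∀ m j' k, (hPD m j').1.eigenvalues k ≤ γ * lmin m := by
    intro m j' k
    have h1 : (hPD m j').1.eigenvalues k ≤ lamMax (S m j') :=
      le_csSup (hbddA m j') (by rw [hspec]; exact Set.mem_range_self k)
    have h2 : lamMax (S m j') ≤ ⨆ j'', lamMax (S m j'') :=
      le_ciSup (f := fun j'' => lamMax (S m j''))
        (Set.Finite.bddAbove (Set.finite_range _)) j'
    exact h1.trans (h2.trans (hratio m))
  have hc_pos : ∀ m, 0 < γ * lmin m := fun m => mul_pos hγ0 (hlmin_pos m)
  have hdet : ∀ m j', (lmin m)^p ≤ (S m j').det := by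
    intro m j'
    rw [(hPD m j').1.det_eq_prod_eigenvalues]
    push_cast
    calc (lmin m)^p = ∏ _k : Fin p, lmin m := by
          rw [Finset.prod_const, Finset.card_univ, Fintype.card_fin]
      _ ≤ ∏ k, (hPD m j').1.eigenvalues k :=
          Finset.prod_le_prod (fun _ _ => (hlmin_pos m).le)
            (fun k _ => (hlmin_le m j').trans (hlamMin_le m j' k))
  -- pigeonhole setup
  obtain ⟨T0, hT0sub, hT0card⟩ :=
    Set.exists_subset_card_eq (show G+1 ≤ (Set.range x).ncard from hcard)
  have hT0fin : T0.Finite := by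
    rcases T0.finite_or_infinite with h | h
    · exact h
    · rw [h.ncard] at hT0card; omega
  set T : Finset (Fin p → ℝ) := hT0fin.toFinset with hTdef
  have hTcard : T.card = G + 1 := by
    rw [hTdef, ← Set.ncard_eq_toFinset_card _ hT0fin]; exact hT0card
  have hTsub : ∀ a ∈ T, a ∈ Set.range x := by
    intro a ha
    exact hT0sub (by rwa [hTdef, Set.Finite.mem_toFinset] at ha)
  obtain ⟨a0, ha0, b0, hb0, hab0⟩ := Finset.one_lt_card.mp (by omega : 1 < T.card)
  have hTne : T.offDiag.Nonempty := ⟨(a0, b0), Finset.mem_offDiag.mpr ⟨ha0, hb0, hab0⟩⟩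
  set δ := T.offDiag.inf' hTne (fun q => dist q.1 q.2) with hδdef
  have hδpos : 0 < δ := by
    rw [hδdef, Finset.lt_inf'_iff]
    rintro ⟨a, b⟩ hab
    rw [Finset.mem_offDiag] at hab
    exact dist_pos.mpr hab.2.2
  set ε := δ/2 with hεdef
  have hε : 0 < ε := by positivity
  have hpig : ∀ m, ∃ i : Fin n, ∀ j', ε ≤ dist (x i) (μ m j') := by
    intro m
    have key : ∃ a ∈ T, ∀ j', ε ≤ dist a (μ m j') := by
      by_contra hcon
      push_neg at hcon
      choose f hf using hcon
      have hcard' : Fintype.card (Fin G) < Fintype.card {a // a ∈ T} := by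
        simp only [Fintype.card_coe, Fintype.card_fin, hTcard]
        omega
      obtain ⟨a, b, hab, hfab⟩ := Fintype.exists_ne_map_eq_of_card_lt
        (fun a : {a // a ∈ T} => f a.1 a.2) hcard'
      have h1 := hf a.1 a.2
      have h2 := hf b.1 b.2
      rw [hfab] at h1
      have hd : dist a.1 b.1 < δ := by
        calc dist a.1 b.1 ≤ dist a.1 (μ m (f b.1 b.2)) + dist (μ m (f b.1 b.2)) b.1 :=
              dist_triangle _ _ _
          _ < ε + ε := by
              rw [dist_comm (μ m (f b.1 b.2))]
              exact add_lt_add h1 h2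
          _ = δ := by rw [hεdef]; ring
      have hmemoff : (a.1, b.1) ∈ T.offDiag :=
        Finset.mem_offDiag.mpr ⟨a.2, b.2, fun h => hab (Subtype.ext h)⟩
      have hδle : δ ≤ dist a.1 b.1 := Finset.inf'_le _ hmemoff
      linarith
    obtain ⟨a, haT, ha⟩ := key
    obtain ⟨i, rfl⟩ := hTsub a haT
    exact ⟨i, ha⟩
  have hdsq : ∀ (v u : Fin p → ℝ), ε ≤ dist v u → ε^2 ≤ (v - u) ⬝ᵥ (v - u) := by
    intro v u hvu
    by_contra hlt
    push_neg at hlt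
    have hklt : ∀ k, dist (v k) (u k) < ε := by
      intro k
      have h1 : (v k - u k)^2 ≤ (v - u) ⬝ᵥ (v - u) := by
        rw [dotProduct]
        have := Finset.single_le_sum (f := fun k => (v - u) k * (v - u) k)
          (fun k _ => mul_self_nonneg _) (Finset.mem_univ k)
        simpa [Pi.sub_apply, sq] using this
      rw [Real.dist_eq]
      exact abs_lt_of_sq_lt_sq (lt_of_le_of_lt h1 hlt) hε.le
    have := (dist_pi_lt_iff hε).mpr hklt
    linarith
  have hdot_nonneg : ∀ (v : Fin p → ℝ), 0 ≤ v ⬝ᵥ v := by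
    intro v
    rw [dotProduct]
    exact Finset.sum_nonneg fun k _ => mul_self_nonneg _
  -- gauss bounds
  have hgauss_pos : ∀ m i j', 0 < gauss (x i) (μ m j') (S m j') := by
    intro m i j'
    exact mul_pos (mul_pos (Real.rpow_pos_of_pos hπ _)
      (Real.rpow_pos_of_pos (hPD m j').det_pos _)) (Real.exp_pos _)
  have hmix_pos : ∀ m i, 0 < ∑ j', w m j' * gauss (x i) (μ m j') (S m j') := by
    intro m i
    have h1 : ∃ j' ∈ Finset.univ, w m j' ≠ 0 := by
      by_contra hc
      push_neg at hc
      have : ∑ j', w m j' = 0 := Finset.sum_eq_zero fun j' hj' => hc j' hj'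
      rw [hsum m] at this
      norm_num at this
    obtain ⟨j0, _, hj0⟩ := h1
    exact Finset.sum_pos' (fun j' _ => mul_nonneg (hw m j') (hgauss_pos m i j').le)
      ⟨j0, Finset.mem_univ _,
        mul_pos (lt_of_le_of_ne (hw m j0) (Ne.symm hj0)) (hgauss_pos m i j0)⟩
  set Am : ℕ → ℝ := fun m => (2*π)^(-(p:ℝ)/2) * (lmin m)^(-(p:ℝ)/2) with hAmdef
  have hAm_pos : ∀ m, 0 < Am m := fun m =>
    mul_pos (Real.rpow_pos_of_pos hπ _) (Real.rpow_pos_of_pos (hlmin_pos m) _)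
  have hgauss_le : ∀ m i j', gauss (x i) (μ m j') (S m j') ≤
      Am m * Real.exp (-(((x i - μ m j') ⬝ᵥ (x i - μ m j')) / (γ * lmin m)) / 2) := by
    intro m i j'
    have hdetb : (S m j').det ^ (-(1:ℝ)/2) ≤ (lmin m) ^ (-(p:ℝ)/2) := by
      calc (S m j').det ^ (-(1:ℝ)/2) ≤ ((lmin m)^p : ℝ) ^ (-(1:ℝ)/2) :=
            Real.rpow_le_rpow_of_nonpos (pow_pos (hlmin_pos m) p) (hdet m j') (by norm_num)
        _ = (lmin m) ^ (-(p:ℝ)/2) := by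
            rw [← Real.rpow_natCast (lmin m) p, ← Real.rpow_mul (hlmin_pos m).le]
            congr 1
            ring
    have hq : ((x i - μ m j') ⬝ᵥ (x i - μ m j')) / (γ * lmin m)
        ≤ (x i - μ m j') ⬝ᵥ ((S m j')⁻¹ *ᵥ (x i - μ m j')) :=
      stmt8_quad_ge (hPD m j') (hc_pos m) (hub m j') _
    have hexp : Real.exp (-((x i - μ m j') ⬝ᵥ ((S m j')⁻¹ *ᵥ (x i - μ m j'))) / 2)
        ≤ Real.exp (-(((x i - μ m j') ⬝ᵥ (x i - μ m j')) / (γ * lmin m)) / 2) :=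
      Real.exp_le_exp.mpr (by linarith)
    calc gauss (x i) (μ m j') (S m j')
        = (2 * π) ^ (-(p : ℝ) / 2) * (S m j').det ^ (-(1 : ℝ) / 2) *
          Real.exp (-((x i - μ m j') ⬝ᵥ ((S m j')⁻¹ *ᵥ (x i - μ m j'))) / 2) := rfl
      _ ≤ (2 * π) ^ (-(p : ℝ) / 2) * (lmin m) ^ (-(p:ℝ)/2) *
          Real.exp (-(((x i - μ m j') ⬝ᵥ (x i - μ m j')) / (γ * lmin m)) / 2) := by
          apply mul_le_mul _ hexp (Real.exp_pos _).le
            (mul_pos (Real.rpow_pos_of_pos hπ _)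
              (Real.rpow_pos_of_pos (hlmin_pos m) _)).le
          exact mul_le_mul_of_nonneg_left hdetb (Real.rpow_pos_of_pos hπ _).le
      _ = Am m * Real.exp (-(((x i - μ m j') ⬝ᵥ (x i - μ m j')) / (γ * lmin m)) / 2) := rfl
  have hmix_le1 : ∀ m i, ∑ j', w m j' * gauss (x i) (μ m j') (S m j') ≤ Am m := by
    intro m i
    calc ∑ j', w m j' * gauss (x i) (μ m j') (S m j') ≤ ∑ j', w m j' * Am m := by
          apply Finset.sum_le_sum
          intro j' _
          apply mul_le_mul_of_nonneg_left _ (hw m j')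
          calc gauss (x i) (μ m j') (S m j')
              ≤ Am m * Real.exp (-(((x i - μ m j') ⬝ᵥ (x i - μ m j')) / (γ * lmin m)) / 2) :=
                hgauss_le m i j'
            _ ≤ Am m * 1 := by
                apply mul_le_mul_of_nonneg_left _ (hAm_pos m).le
                apply Real.exp_le_one_iff.mpr
                have h0 : 0 ≤ ((x i - μ m j') ⬝ᵥ (x i - μ m j')) / (γ * lmin m) :=
                  div_nonneg (hdot_nonneg _) (hc_pos m).le
                linarith
            _ = Am m := mul_one _
      _ = Am m := by rw [← Finset.sum_mul, hsum m, one_mul]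
  have hmix_le2 : ∀ m i, (∀ j', ε ≤ dist (x i) (μ m j')) →
      ∑ j', w m j' * gauss (x i) (μ m j') (S m j')
        ≤ Am m * Real.exp (-(ε^2 / (γ * lmin m)) / 2) := by
    intro m i hi
    calc ∑ j', w m j' * gauss (x i) (μ m j') (S m j')
        ≤ ∑ j', w m j' * (Am m * Real.exp (-(ε^2 / (γ * lmin m)) / 2)) := by
          apply Finset.sum_le_sum
          intro j' _
          apply mul_le_mul_of_nonneg_left _ (hw m j')
          calc gauss (x i) (μ m j') (S m j')
              ≤ Am m * Real.exp (-(((x i - μ m j') ⬝ᵥ (x i - μ m j')) / (γ * lmin m)) / 2) :=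
                hgauss_le m i j'
            _ ≤ Am m * Real.exp (-(ε^2 / (γ * lmin m)) / 2) := by
                apply mul_le_mul_of_nonneg_left _ (hAm_pos m).le
                apply Real.exp_le_exp.mpr
                have h1 : ε^2 ≤ (x i - μ m j') ⬝ᵥ (x i - μ m j') := hdsq _ _ (hi j')
                have h2 : ε^2 / (γ * lmin m) ≤ ((x i - μ m j') ⬝ᵥ (x i - μ m j')) / (γ * lmin m) :=
                  (div_le_div_iff_of_pos_right (hc_pos m)).mpr h1
                linarith
      _ = Am m * Real.exp (-(ε^2 / (γ * lmin m)) / 2) := by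
          rw [← Finset.sum_mul, hsum m, one_mul]
  -- logarithm bounds
  have hlog1 : ∀ m i, Real.log (∑ j', w m j' * gauss (x i) (μ m j') (S m j'))
      ≤ Real.log (Am m) := fun m i => Real.log_le_log (hmix_pos m i) (hmix_le1 m i)
  have hlog2 : ∀ m i, (∀ j', ε ≤ dist (x i) (μ m j')) →
      Real.log (∑ j', w m j' * gauss (x i) (μ m j') (S m j'))
        ≤ Real.log (Am m) + (-(ε^2 / (γ * lmin m)) / 2) := by
    intro m i hi
    have h := Real.log_le_log (hmix_pos m i) (hmix_le2 m i hi)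
    rwa [Real.log_mul (hAm_pos m).ne' (Real.exp_ne_zero _), Real.log_exp] at h
  have hsumlog : ∀ m, ∑ i, Real.log (∑ j', w m j' * gauss (x i) (μ m j') (S m j'))
      ≤ (n:ℝ) * Real.log (Am m) + (-(ε^2 / (γ * lmin m)) / 2) := by
    intro m
    obtain ⟨i0, hi0⟩ := hpig m
    calc ∑ i, Real.log (∑ j', w m j' * gauss (x i) (μ m j') (S m j'))
        ≤ ∑ i, (Real.log (Am m) + if i = i0 then (-(ε^2 / (γ * lmin m)) / 2) else 0) := by
          apply Finset.sum_le_sum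
          intro i _
          by_cases h : i = i0
          · subst h
            simp only [if_pos rfl]
            exact hlog2 m i hi0
          · simp only [if_neg h, add_zero]
            exact hlog1 m i
      _ = (n:ℝ) * Real.log (Am m) + (-(ε^2 / (γ * lmin m)) / 2) := by
          rw [Finset.sum_add_distrib, Finset.sum_const, Finset.card_univ, Fintype.card_fin,
            nsmul_eq_mul, Finset.sum_ite_eq' Finset.univ i0, if_pos (Finset.mem_univ _)]
  have hlogAm : ∀ m, Real.log (Am m)
      = (-(p:ℝ)/2) * Real.log (2*π) + (-(p:ℝ)/2) * Real.log (lmin m) := by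
    intro m
    rw [show Am m = (2*π)^(-(p:ℝ)/2) * (lmin m)^(-(p:ℝ)/2) from rfl,
      Real.log_mul (Real.rpow_pos_of_pos hπ _).ne' (Real.rpow_pos_of_pos (hlmin_pos m) _).ne',
      Real.log_rpow hπ, Real.log_rpow (hlmin_pos m)]
  -- the comparison function
  set B : ℝ → ℝ := fun s => (1/(n:ℝ)) *
    ((n:ℝ) * ((-(p:ℝ)/2) * Real.log (2*π) + (-(p:ℝ)/2) * Real.log s)
      + (-(ε^2 / (γ * s)) / 2)) with hBdef
  have hle : ∀ m, (1 / n : ℝ) * ∑ i, Real.log (∑ j', w m j' * gauss (x i) (μ m j') (S m j'))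
      ≤ B (lmin m) := by
    intro m
    rw [hBdef]
    apply mul_le_mul_of_nonneg_left _ (by positivity)
    calc ∑ i, Real.log (∑ j', w m j' * gauss (x i) (μ m j') (S m j'))
        ≤ (n:ℝ) * Real.log (Am m) + (-(ε^2 / (γ * lmin m)) / 2) := hsumlog m
      _ = (n:ℝ) * ((-(p:ℝ)/2) * Real.log (2*π) + (-(p:ℝ)/2) * Real.log (lmin m))
          + (-(ε^2 / (γ * lmin m)) / 2) := by rw [hlogAm m]
  have hsubIoi : Tendsto lmin atTop (𝓝[>] (0:ℝ)) :=
    tendsto_nhdsWithin_of_tendsto_nhds_of_eventually_within _ hlmin_to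
      (Eventually.of_forall fun m => Set.mem_Ioi.mpr (hlmin_pos m))
  have hBbot : Tendsto B (𝓝[>] (0:ℝ)) atBot := by
    have hinner : Tendsto (fun s : ℝ => (n:ℝ) * ((-(p:ℝ)/2) * Real.log (2*π)) * s
        + (n:ℝ) * (-(p:ℝ)/2) * (Real.log s * s) + (-(ε^2/γ)/2)) (𝓝[>] (0:ℝ))
        (𝓝 (-(ε^2/γ)/2)) := by
      have h1 : Tendsto (fun s : ℝ => (n:ℝ) * ((-(p:ℝ)/2) * Real.log (2*π)) * s)
          (𝓝[>] (0:ℝ)) (𝓝 0) := by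
        have h0 : Tendsto (fun s : ℝ => (n:ℝ) * ((-(p:ℝ)/2) * Real.log (2*π)) * s)
            (𝓝 (0:ℝ)) (𝓝 ((n:ℝ) * ((-(p:ℝ)/2) * Real.log (2*π)) * 0)) :=
          (continuous_const.mul continuous_id).tendsto 0
        rw [mul_zero] at h0
        exact h0.mono_left nhdsWithin_le_nhds
      have h2 : Tendsto (fun s : ℝ => Real.log s * s) (𝓝[>] (0:ℝ)) (𝓝 0) := by
        have := tendsto_log_mul_rpow_nhdsGT_zero one_pos
        simpa using this
      have h2' := h2.const_mul ((n:ℝ) * (-(p:ℝ)/2))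
      rw [mul_zero] at h2'
      have h3 := (h1.add h2').add_const (-(ε^2/γ)/2)
      simpa using h3
    have hC : -(ε^2/γ)/2 < 0 := by
      have : 0 < ε^2/γ := by positivity
      linarith
    have hmain : Tendsto (fun s : ℝ => s⁻¹ * ((n:ℝ) * ((-(p:ℝ)/2) * Real.log (2*π)) * s
        + (n:ℝ) * (-(p:ℝ)/2) * (Real.log s * s) + (-(ε^2/γ)/2))) (𝓝[>] (0:ℝ)) atBot :=
      Tendsto.atTop_mul_neg hC tendsto_inv_nhdsGT_zero hinner
    have hmain' := Tendsto.const_mul_atBot (show (0:ℝ) < 1/(n:ℝ) by positivity) hmain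
    apply Tendsto.congr' _ hmain'
    filter_upwards [self_mem_nhdsWithin] with s hs
    have hs0 : (s:ℝ) ≠ 0 := (Set.mem_Ioi.mp hs).ne'
    rw [hBdef]
    have hγne : γ ≠ 0 := hγ0.ne'
    have hnne : (n:ℝ) ≠ 0 := hn0.ne'
    field_simp
  exact tendsto_atBot_mono hle (hBbot.comp hsubIoi)
end

section
/- For any probability measure P on ℝ^p, the supremum L_G = sup_{θ ∈ Θ_G} E_P[log ψ_δ(x,θ)] over the population-level constrained parameter space is strictly greater than -∞. -/
open Real Matrix Filter Topology MeasureTheory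

/-- parameter vector θ = (π₀, (π_j), (μ_j), (Σ_j)) of a Gaussian mixture with
improper uniform (noise) component -/
abbrev Param (p G : ℕ) :=
  ℝ × (Fin G → ℝ) × (Fin G → (Fin p → ℝ)) × (Fin G → Matrix (Fin p) (Fin p) ℝ)

/-- noise proportion π₀ -/
def pi0 {p G : ℕ} (θ : Param p G) : ℝ := θ.1

/-- mixture proportions π_j -/
def wt {p G : ℕ} (θ : Param p G) : Fin G → ℝ := θ.2.1

/-- component means μ_j -/
def mean {p G : ℕ} (θ : Param p G) : Fin G → Fin p → ℝ := θ.2.2.1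

/-- component covariance matrices Σ_j -/
def covm {p G : ℕ} (θ : Param p G) : Fin G → Matrix (Fin p) (Fin p) ℝ := θ.2.2.2

/-- the improper pseudo-density ψ_δ(x, θ) = π₀δ + Σ_j π_j φ(x; μ_j, Σ_j) -/
noncomputable def psi {p G : ℕ} (δ : ℝ) (θ : Param p G) (x : Fin p → ℝ) : ℝ :=
  pi0 θ * δ + ∑ j, wt θ j * gauss x (mean θ j) (covm θ j)

/-- λ_min(θ): smallest eigenvalue among all component covariances -/
noncomputable def lamMinP {p G : ℕ} (θ : Param p G) : ℝ := ⨅ j, lamMin (covm θ j)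

/-- λ_max(θ): largest eigenvalue among all component covariances -/
noncomputable def lamMaxP {p G : ℕ} (θ : Param p G) : ℝ := ⨆ j, lamMax (covm θ j)

/-- basic parameter constraints: proportions nonnegative summing to one,
positive definite covariances, eigenratio λ_max(θ)/λ_min(θ) ≤ γ -/
def baseOK {p G : ℕ} (γ : ℝ) (θ : Param p G) : Prop :=
  0 ≤ pi0 θ ∧ (∀ j, 0 ≤ wt θ j) ∧ pi0 θ + ∑ j, wt θ j = 1 ∧
    (∀ j, (covm θ j).PosDef) ∧ lamMaxP θ ≤ γ * lamMinP θ

/-- the finite-sample constrained parameter space Θ (eigenratio bound and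
estimated noise proportion (1/n) Σ_i τ₀(x_i, θ) ≤ π_max) -/
def ThetaN {p G n : ℕ} (δ γ πmax : ℝ) (x : Fin n → Fin p → ℝ) : Set (Param p G) :=
  {θ | baseOK γ θ ∧ (1 / n : ℝ) * ∑ i, pi0 θ * δ / psi δ θ (x i) ≤ πmax}

/-- the improper pseudo-log-likelihood l_n(θ) = (1/n) Σ_i log ψ_δ(x_i, θ) -/
noncomputable def ln {p G n : ℕ} (δ : ℝ) (x : Fin n → Fin p → ℝ) (θ : Param p G) : ℝ :=
  (1 / n : ℝ) * ∑ i, Real.log (psi δ θ (x i))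

/-- the population constrained parameter space Θ_G (noise constraint
E_P[π₀δ/ψ_δ(x,θ)] ≤ π_max, eigenratio constraint, and well-definedness of L) -/
def ThetaG {p : ℕ} (G : ℕ) (P : Measure (Fin p → ℝ)) (δ γ πmax : ℝ) : Set (Param p G) :=
  {θ | baseOK γ θ ∧ Integrable (fun x => Real.log (psi δ θ x)) P ∧
    ∫ x, pi0 θ * δ / psi δ θ x ∂P ≤ πmax}

/-- the population pseudo-log-likelihood L(θ) = E_P[log ψ_δ(x, θ)] -/
noncomputable def LL {p G : ℕ} (P : Measure (Fin p → ℝ)) (δ : ℝ) (θ : Param p G) : ℝ :=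
  ∫ x, Real.log (psi δ θ x) ∂P

/-- assumption A1: P puts mass < 1 - π_max on every set of G points -/
def A1 {p : ℕ} (P : Measure (Fin p → ℝ)) (πmax : ℝ) (G : ℕ) : Prop :=
  ∀ y : Fin G → Fin p → ℝ, P (Set.range y) < ENNReal.ofReal (1 - πmax)


section Aux

variable {p : ℕ}

/-- the standard Gaussian density at `x` -/
noncomputable def gstd (p : ℕ) (x : Fin p → ℝ) : ℝ := gauss x 0 1

lemma gstd_eq (x : Fin p → ℝ) :
    gstd p x = (2 * π) ^ (-(p : ℝ) / 2) * Real.exp (-(x ⬝ᵥ x) / 2) := by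
  simp [gstd, gauss, Matrix.det_one, Real.one_rpow, Matrix.one_mulVec]

lemma const_pos : (0 : ℝ) < (2 * π) ^ (-(p : ℝ) / 2) :=
  Real.rpow_pos_of_pos (by positivity) _

lemma dot_self_nonneg (x : Fin p → ℝ) : 0 ≤ x ⬝ᵥ x :=
  Finset.sum_nonneg fun i _ => mul_self_nonneg _

lemma gstd_pos (x : Fin p → ℝ) : 0 < gstd p x := by
  rw [gstd_eq]; positivity

lemma gstd_le (x : Fin p → ℝ) : gstd p x ≤ (2 * π) ^ (-(p : ℝ) / 2) := by
  rw [gstd_eq]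
  exact mul_le_of_le_one_right (le_of_lt const_pos)
    (Real.exp_le_one_iff.2 (by nlinarith [dot_self_nonneg x]))

lemma gstd_continuous : Continuous (gstd p) := by
  have : Continuous fun x : Fin p → ℝ => x ⬝ᵥ x := by
    unfold dotProduct
    exact continuous_finset_sum _ fun i _ =>
      ((continuous_apply i).mul (continuous_apply i))
  have h2 : Continuous fun x : Fin p → ℝ =>
      (2 * π) ^ (-(p : ℝ) / 2) * Real.exp (-(x ⬝ᵥ x) / 2) :=
    continuous_const.mul ((this.neg.div_const 2).rexp)
  simpa only [← gstd_eq] using h2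

end Aux

/-- Lemma 3: for any probability measure P on ℝ^p, the supremum of the
population pseudo-log-likelihood over Θ_G is > -∞: there is θ ∈ Θ_G whose
pseudo-log-density is bounded below. -/
theorem stmt12 {p G : ℕ} (hp : 0 < p) (hG : 0 < G)
    (P : Measure (Fin p → ℝ)) [IsProbabilityMeasure P]
    (δ γ πmax : ℝ) (hδ : 0 < δ) (hγ : 1 ≤ γ) (hπ0 : 0 < πmax) (hπ1 : πmax < 1) :
    ∃ θ ∈ ThetaG G P δ γ πmax, ∃ b : ℝ, ∀ x, b ≤ Real.log (psi δ θ x) := by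
  -- the candidate parameters: noise weight a, equal weights on standard Gaussians
  have hGne : (G : ℝ) ≠ 0 := Nat.cast_ne_zero.2 hG.ne'
  haveI : Nonempty (Fin G) := ⟨⟨0, hG⟩⟩
  haveI : Nonempty (Fin p) := ⟨⟨0, hp⟩⟩
  set c : ℝ := (2 * π) ^ (-(p : ℝ) / 2) with hc
  -- the family with noise weight a
  set Θ : ℝ → Param p G := fun a => (a, fun _ => (1 - a) / G, fun _ => 0, fun _ => 1)
    with hΘ
  have hpsi : ∀ a, 0 ≤ a → a ≤ 1 → ∀ x, psi δ (Θ a) x = a * δ + (1 - a) * gstd p x := by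
    intro a _ _ x
    simp only [psi, pi0, wt, mean, covm, hΘ, gstd]
    rw [Finset.sum_const, Finset.card_univ, Fintype.card_fin]
    rw [nsmul_eq_mul]
    field_simp
  have hpsipos : ∀ a, 0 < a → a ≤ 1 → ∀ x, 0 < psi δ (Θ a) x := by
    intro a ha ha1 x
    rw [hpsi a ha.le ha1]
    have := gstd_pos x
    nlinarith
  -- dominated convergence: the noise constraint integral tends to 0
  set F : ℕ → (Fin p → ℝ) → ℝ := fun n x =>
    (1 / (n + 1) : ℝ) * δ / ((1 / (n + 1) : ℝ) * δ + (1 - 1 / (n + 1)) * gstd p x) with hF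
  have han : ∀ n : ℕ, 0 < (1 / (n + 1) : ℝ) := fun n => by positivity
  have han1 : ∀ n : ℕ, (1 / (n + 1) : ℝ) ≤ 1 := by
    intro n
    rw [div_le_one (by positivity)]
    linarith [Nat.cast_nonneg (α := ℝ) n]
  have hden : ∀ (n : ℕ) (x : Fin p → ℝ), 0 < (1 / (n + 1) : ℝ) * δ + (1 - 1 / (n + 1)) * gstd p x := by
    intro n x
    have := gstd_pos x
    have := han n; have := han1 n
    nlinarith
  have hFmeas : ∀ n, AEStronglyMeasurable (F n) P := by
    intro n
    refine Continuous.aestronglyMeasurable ?_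
    exact continuous_const.div
      (continuous_const.add (continuous_const.mul gstd_continuous))
      (fun x => (hden n x).ne')
  have hFbd : ∀ n, ∀ᵐ x ∂P, ‖F n x‖ ≤ (1 : ℝ) := by
    intro n
    refine Filter.Eventually.of_forall fun x => ?_
    have h1 := hden n x
    have h2 : 0 ≤ (1 / (n + 1) : ℝ) * δ := by positivity
    rw [Real.norm_eq_abs, abs_of_nonneg (div_nonneg h2 h1.le), div_le_one h1]
    have := gstd_pos x
    have := han1 n
    nlinarith
  have hFlim : ∀ᵐ x ∂P, Tendsto (fun n => F n x) atTop (𝓝 0) := by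
    refine Filter.Eventually.of_forall fun x => ?_
    have h0 : Tendsto (fun n : ℕ => (1 / (n + 1) : ℝ)) atTop (𝓝 0) :=
      tendsto_one_div_add_atTop_nhds_zero_nat
    have hnum : Tendsto (fun n : ℕ => (1 / (n + 1) : ℝ) * δ) atTop (𝓝 0) := by
      simpa using h0.mul_const δ
    have hde : Tendsto (fun n : ℕ =>
        (1 / (n + 1) : ℝ) * δ + (1 - 1 / (n + 1)) * gstd p x) atTop
        (𝓝 (0 + (1 - 0) * gstd p x)) :=
      hnum.add (((tendsto_const_nhds.sub h0).mul_const _))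
    have hgx := gstd_pos x
    have : Tendsto (fun n => F n x) atTop (𝓝 (0 / (0 + (1 - 0) * gstd p x))) :=
      hnum.div hde (by simp [hgx.ne'])
    simpa using this
  have hInt : Tendsto (fun n => ∫ x, F n x ∂P) atTop (𝓝 0) := by
    have := MeasureTheory.tendsto_integral_of_dominated_convergence
      (fun _ => (1 : ℝ)) hFmeas (integrable_const 1) hFbd hFlim
    simpa using this
  obtain ⟨N, hN⟩ := (hInt.eventually_lt_const hπ0).exists
  set a : ℝ := 1 / (N + 1) with ha
  have ha0 : 0 < a := han N
  have ha1 : a ≤ 1 := han1 N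
  refine ⟨Θ a, ⟨⟨ha0.le, fun j => by simp only [wt, hΘ]; exact div_nonneg (by linarith) (Nat.cast_nonneg G), ?_, fun j => Matrix.PosDef.one, ?_⟩,
    ?_, ?_⟩, Real.log (a * δ), ?_⟩
  · -- weights sum to one
    simp only [pi0, wt, hΘ]
    rw [Finset.sum_const, Finset.card_univ, Fintype.card_fin]
    rw [nsmul_eq_mul]
    field_simp
    ring
  · -- eigenvalue ratio
    have hone : spectrum ℝ (1 : Matrix (Fin p) (Fin p) ℝ) = {1} := spectrum.one_eq
    have hmin : lamMin (1 : Matrix (Fin p) (Fin p) ℝ) = 1 := by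
      rw [lamMin, hone, csInf_singleton]
    have hmax : lamMax (1 : Matrix (Fin p) (Fin p) ℝ) = 1 := by
      rw [lamMax, hone, csSup_singleton]
    have h1 : lamMinP (Θ a) = 1 := by
      simp only [lamMinP, covm, hΘ, hmin, ciInf_const]
    have h2 : lamMaxP (Θ a) = 1 := by
      simp only [lamMaxP, covm, hΘ, hmax, ciSup_const]
    rw [h1, h2]; linarith
  · -- integrability of log ψ
    have hψc : Continuous (fun x => psi δ (Θ a) x) := by
      have : Continuous fun x : Fin p → ℝ => a * δ + (1 - a) * gstd p x :=
        continuous_const.add (continuous_const.mul gstd_continuous)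
      exact this.congr fun x => (hpsi a ha0.le ha1 x).symm
    have hlogc : Continuous (fun x => Real.log (psi δ (Θ a) x)) := by
      rw [continuous_iff_continuousAt]
      intro x
      exact (Real.continuousAt_log (hpsipos a ha0 ha1 x).ne').comp hψc.continuousAt
    refine (integrable_const (max |Real.log (a * δ)| |Real.log (a * δ + c)|)).mono'
      hlogc.aestronglyMeasurable (Filter.Eventually.of_forall fun x => ?_)
    have hlb : Real.log (a * δ) ≤ Real.log (psi δ (Θ a) x) := by
      refine Real.log_le_log (by positivity) ?_
      rw [hpsi a ha0.le ha1 x]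
      have := gstd_pos x
      nlinarith
    have hub : Real.log (psi δ (Θ a) x) ≤ Real.log (a * δ + c) := by
      refine Real.log_le_log (hpsipos a ha0 ha1 x) ?_
      rw [hpsi a ha0.le ha1 x]
      have h1 := gstd_le x
      have h2 := gstd_pos x
      have h3 : (0:ℝ) < c := const_pos
      nlinarith
    rw [Real.norm_eq_abs, abs_le]
    constructor
    · calc -(max |Real.log (a * δ)| |Real.log (a * δ + c)|)
          ≤ -|Real.log (a * δ)| := by
            exact neg_le_neg (le_max_left _ _)
        _ ≤ Real.log (a * δ) := neg_abs_le _
        _ ≤ _ := hlb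
    · exact hub.trans ((le_abs_self _).trans (le_max_right _ _))
  · -- noise constraint
    have : (∫ x, pi0 (Θ a) * δ / psi δ (Θ a) x ∂P) = ∫ x, F N x ∂P := by
      refine integral_congr_ae (Filter.Eventually.of_forall fun x => ?_)
      show pi0 (Θ a) * δ / psi δ (Θ a) x = F N x
      rw [hpsi a ha0.le ha1 x]; simp only [pi0, hΘ, hF, ha]
    rw [this]; exact hN.le
  · -- lower bound on log ψ
    intro x
    refine Real.log_le_log (by positivity) ?_
    rw [hpsi a ha0.le ha1 x]
    have := gstd_pos x
    nlinarith
end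

section
/- Assume A1 holds and let A_{m,ε} = {x : min_{1≤j≤G} ‖x - μ_{j,m}‖ ≥ ε}. If θ_m ∈ Θ_G satisfies P(A_{m,ε}) ≥ π_max + ε_7 for some ε_7 > 0, then the noise proportion constraint E_P[π_{0,m}δ/ψ_δ(x,θ_m)] ≤ π_max implies the bound π_{0,m} ≤ π_max · max_{x ∈ A_{m,ε}} η(x, θ_m) / (δ · (P(A_{m,ε}) - π_max)), where η(x,θ) = Σ_{j=1}^G π_j φ(x; μ_j, Σ_j). -/
open Real Matrix Filter Topology MeasureTheory

/-- on the event A = A_{ε}(θ) of points at (euclidean) distance ≥ ε from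
all component means, if P(A) ≥ π_max + ε₇, then the noise-proportion constraint
E_P[π₀δ/ψ_δ] ≤ π_max implies π₀ ≤ π_max · sup_{x ∈ A} η(x,θ) / (δ (P(A) - π_max)). -/
theorem stmt15 {p G : ℕ} (hp : 0 < p) (hG : 0 < G)
    (P : Measure (Fin p → ℝ)) [IsProbabilityMeasure P]
    (δ πmax ε ε7 : ℝ) (hδ : 0 < δ) (hπ0 : 0 < πmax) (hπ1 : πmax < 1)
    (hε : 0 < ε) (hε7 : 0 < ε7) (θ : Param p G)
    (h0 : 0 ≤ pi0 θ) (hw : ∀ j, 0 ≤ wt θ j) (hsum : pi0 θ + ∑ j, wt θ j = 1)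
    (hPD : ∀ j, (covm θ j).PosDef)
    (A : Set (Fin p → ℝ))
    (hAdef : A = {x | ∀ j, ε ≤ Real.sqrt (∑ i, (x i - mean θ j i) ^ 2)})
    (hPA : ENNReal.ofReal (πmax + ε7) ≤ P A)
    (hcon : ∫ x, pi0 θ * δ / psi δ θ x ∂P ≤ πmax) :
    pi0 θ ≤
      πmax * sSup ((fun x => ∑ j, wt θ j * gauss x (mean θ j) (covm θ j)) '' A) /
        (δ * ((P A).toReal - πmax)) := by
  set η : (Fin p → ℝ) → ℝ := fun x => ∑ j, wt θ j * gauss x (mean θ j) (covm θ j) with hηdef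
  -- positivity of gauss
  have hgpos : ∀ (x : Fin p → ℝ) j, 0 < gauss x (mean θ j) (covm θ j) := by
    intro x j
    unfold gauss
    have h1 : (0:ℝ) < (2 * π) ^ (-(p : ℝ) / 2) :=
      Real.rpow_pos_of_pos (by positivity) _
    have h2 : (0:ℝ) < (covm θ j).det ^ (-(1:ℝ) / 2) :=
      Real.rpow_pos_of_pos (hPD j).det_pos _
    positivity
  have hηnn : ∀ x, 0 ≤ η x := fun x =>
    Finset.sum_nonneg fun j _ => mul_nonneg (hw j) (hgpos x j).le
  -- upper bound on gauss
  have hquad : ∀ (x : Fin p → ℝ) j,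
      0 ≤ (x - mean θ j) ⬝ᵥ ((covm θ j)⁻¹ *ᵥ (x - mean θ j)) := by
    intro x j
    have := ((hPD j).inv).posSemidef.re_dotProduct_nonneg (x - mean θ j)
    simpa using this
  set C : ℝ := ∑ j, wt θ j * ((2 * π) ^ (-(p : ℝ) / 2) * (covm θ j).det ^ (-(1:ℝ) / 2))
    with hCdef
  have hCb : ∀ x, η x ≤ C := by
    intro x
    refine Finset.sum_le_sum fun j _ => mul_le_mul_of_nonneg_left ?_ (hw j)
    unfold gauss
    have h1 : (0:ℝ) < (2 * π) ^ (-(p : ℝ) / 2) :=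
      Real.rpow_pos_of_pos (by positivity) _
    have h2 : (0:ℝ) < (covm θ j).det ^ (-(1:ℝ) / 2) :=
      Real.rpow_pos_of_pos (hPD j).det_pos _
    nth_rewrite 2 [← mul_one ((2 * π) ^ (-(p : ℝ) / 2) * (covm θ j).det ^ (-(1:ℝ) / 2))]
    refine mul_le_mul_of_nonneg_left ?_ (by positivity)
    rw [Real.exp_le_one_iff]
    have := hquad x j
    linarith
  have hbdd : BddAbove (η '' A) := ⟨C, by rintro _ ⟨x, -, rfl⟩; exact hCb x⟩
  -- A is nonempty
  have hPApos : 0 < P A :=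
    lt_of_lt_of_le (by simp [ENNReal.ofReal_pos]; linarith) hPA
  have hAne : A.Nonempty := by
    rw [Set.nonempty_iff_ne_empty]
    rintro rfl
    simp at hPApos
  set M : ℝ := sSup (η '' A) with hMdef
  have hM0 : 0 ≤ M := by
    obtain ⟨x, hx⟩ := hAne
    exact le_trans (hηnn x) (le_csSup hbdd ⟨x, hx, rfl⟩)
  -- P A as a real number
  have hPAfin : P A ≠ ⊤ := (measure_lt_top P A).ne
  have hPAr : πmax + ε7 ≤ (P A).toReal := by
    have := ENNReal.toReal_mono hPAfin hPA
    rwa [ENNReal.toReal_ofReal (by linarith)] at this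
  have hden : 0 < (P A).toReal - πmax := by linarith
  rcases eq_or_lt_of_le h0 with h0' | h0'
  · rw [← h0']
    positivity
  -- main case: π₀ > 0
  have hψpos : ∀ x, 0 < psi δ θ x := by
    intro x
    have : 0 < pi0 θ * δ := mul_pos h0' hδ
    have := hηnn x
    unfold psi
    simp only [hηdef] at *
    linarith
  -- continuity / measurability
  have hψcont : Continuous (psi δ θ) := by
    unfold psi gauss
    refine continuous_const.add (continuous_finset_sum _ fun j _ => continuous_const.mul
      (continuous_const.mul (Real.continuous_exp.comp ?_)))
    have hq : Continuous fun x : Fin p → ℝ =>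
        (x - mean θ j) ⬝ᵥ ((covm θ j)⁻¹ *ᵥ (x - mean θ j)) := by
      simp only [dotProduct, mulVec, Pi.sub_apply]
      fun_prop
    exact hq.neg.div_const 2
  set f : (Fin p → ℝ) → ℝ := fun x => pi0 θ * δ / psi δ θ x with hfdef
  have hfcont : Continuous f := continuous_const.div hψcont fun x => (hψpos x).ne'
  have hfnn : ∀ x, 0 ≤ f x := fun x => div_nonneg (by positivity) (hψpos x).le
  have hfle1 : ∀ x, f x ≤ 1 := by
    intro x
    rw [div_le_one (hψpos x)]
    have := hηnn x
    unfold psi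
    simp only [hηdef] at *
    linarith
  have hInt : Integrable f P := by
    refine Integrable.mono' (integrable_const 1) hfcont.aestronglyMeasurable ?_
    filter_upwards with x
    rw [Real.norm_eq_abs, abs_of_nonneg (hfnn x)]
    exact hfle1 x
  have hAmeas : MeasurableSet A := by
    rw [hAdef]
    have : {x : Fin p → ℝ | ∀ j, ε ≤ Real.sqrt (∑ i, (x i - mean θ j i) ^ 2)} =
        ⋂ j, {x | ε ≤ Real.sqrt (∑ i, (x i - mean θ j i) ^ 2)} := by
      ext x; simp
    rw [this]
    refine MeasurableSet.iInter fun j => ?_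
    have : Continuous fun x : Fin p → ℝ => Real.sqrt (∑ i, (x i - mean θ j i) ^ 2) := by
      fun_prop
    exact measurableSet_le measurable_const this.measurable
  -- lower bound of f on A
  set c : ℝ := pi0 θ * δ / (pi0 θ * δ + M) with hcdef
  have hlb : ∀ x ∈ A, c ≤ f x := by
    intro x hx
    have hηM : η x ≤ M := le_csSup hbdd ⟨x, hx, rfl⟩
    have hpsix : psi δ θ x ≤ pi0 θ * δ + M := by
      unfold psi; simp only [hηdef] at *; linarith
    exact div_le_div_of_nonneg_left (by positivity) (hψpos x) hpsix
  have step2 : c * (P A).toReal ≤ ∫ x in A, f x ∂P :=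
    setIntegral_ge_of_const_le_real hAmeas hPAfin hlb hInt.integrableOn
  have step1 : ∫ x in A, f x ∂P ≤ ∫ x, f x ∂P :=
    setIntegral_le_integral hInt (Filter.Eventually.of_forall hfnn)
  have key : c * (P A).toReal ≤ πmax := le_trans (le_trans step2 step1) hcon
  -- unfold c and conclude
  have haM : 0 < pi0 θ * δ + M := by positivity
  have key2 : pi0 θ * δ * (P A).toReal ≤ πmax * (pi0 θ * δ + M) := by
    have := key
    rw [hcdef, div_mul_eq_mul_div, div_le_iff₀ haM] at this
    linarith
  rw [le_div_iff₀ (by positivity)]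
  nlinarith [mul_pos h0' hδ]
end
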